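/- In an n×k lonesum 01 matrix, the number of distinct nonzero column vectors occurring among its columns equals the number of distinct nonzero row vectors occurring among its rows. -/

import Mathlib

open Finset

/-- A 01 matrix (encoded with `Bool` entries) is lonesum iff it avoids the
two 2×2 permutation submatrices. -/
def Lonesum {n k : ℕ} (M : Fin n → Fin k → Bool) : Prop :=
  ∀ i i' : Fin n, ∀ j j' : Fin k, i < i' → j < j' →
    ¬(M i j = true ∧ M i j' = false ∧ M i' j = false ∧ M i' j' = true) ∧
    ¬(M i j = false ∧ M i j' = true ∧ M i' j = true ∧ M i' j' = false)

/-- In a finite nonempty set whose image vectors are pairwise comparable,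
there is a minimal one. -/
lemma lonesum_exists_min_comparable {α : Type*} {m : ℕ} (s : Finset α) (hs : s.Nonempty)
    (f : α → Fin m → Bool)
    (hcomp : ∀ a ∈ s, ∀ b ∈ s,
      (∀ i, f a i = true → f b i = true) ∨ (∀ i, f b i = true → f a i = true)) :
    ∃ a ∈ s, ∀ b ∈ s, ∀ i, f a i = true → f b i = true := by
  obtain ⟨a, ha, hmin⟩ := Finset.exists_min_image s
    (fun a => (univ.filter fun i => f a i = true).card) hs
  refine ⟨a, ha, fun b hb => ?_⟩
  rcases hcomp a ha b hb with h | h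
  · exact h
  · have hsub : (univ.filter fun i => f b i = true) ⊆ (univ.filter fun i => f a i = true) := by
      intro i hi
      simp only [mem_filter, mem_univ, true_and] at hi ⊢
      exact h i hi
    have heq := Finset.eq_of_subset_of_card_le hsub (hmin b hb)
    intro i hi
    have hmem : i ∈ (univ.filter fun i => f b i = true) := by
      rw [heq]; simp [hi]
    simpa using hmem

lemma lonesum_cols_comp {n k : ℕ} (M : Fin n → Fin k → Bool) (hM : Lonesum M)
    (j j' : Fin k) :
    (∀ i, M i j = true → M i j' = true) ∨ (∀ i, M i j' = true → M i j = true) := by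
  by_contra h
  push_neg at h
  obtain ⟨⟨i, hi1, hi2⟩, ⟨i', hi'1, hi'2⟩⟩ := h
  simp only [ne_eq, Bool.not_eq_true] at hi2 hi'2
  rcases lt_trichotomy j j' with hj | hj | hj
  · rcases lt_trichotomy i i' with hi | hi | hi
    · exact (hM i i' j j' hi hj).1 ⟨hi1, hi2, hi'2, hi'1⟩
    · subst hi; simp [hi1] at hi'2
    · exact (hM i' i j j' hi hj).2 ⟨hi'2, hi'1, hi1, hi2⟩
  · subst hj; simp [hi1] at hi2
  · rcases lt_trichotomy i i' with hi | hi | hi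
    · exact (hM i i' j' j hi hj).2 ⟨hi2, hi1, hi'1, hi'2⟩
    · subst hi; simp [hi1] at hi'2
    · exact (hM i' i j' j hi hj).1 ⟨hi'1, hi'2, hi2, hi1⟩

lemma lonesum_rows_comp {n k : ℕ} (M : Fin n → Fin k → Bool) (hM : Lonesum M)
    (i i' : Fin n) :
    (∀ j, M i j = true → M i' j = true) ∨ (∀ j, M i' j = true → M i j = true) := by
  by_contra h
  push_neg at h
  obtain ⟨⟨j, hj1, hj2⟩, ⟨j', hj'1, hj'2⟩⟩ := h
  simp only [ne_eq, Bool.not_eq_true] at hj2 hj'2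
  rcases lt_trichotomy i i' with hi | hi | hi
  · rcases lt_trichotomy j j' with hj | hj | hj
    · exact (hM i i' j j' hi hj).1 ⟨hj1, hj'2, hj2, hj'1⟩
    · subst hj; simp [hj1] at hj'2
    · exact (hM i i' j' j hi hj).2 ⟨hj'2, hj1, hj'1, hj2⟩
  · subst hi; simp [hj1] at hj2
  · rcases lt_trichotomy j j' with hj | hj | hj
    · exact (hM i' i j j' hi hj).2 ⟨hj2, hj'1, hj1, hj'2⟩
    · subst hj; simp [hj1] at hj'2
    · exact (hM i' i j' j hi hj).1 ⟨hj'1, hj2, hj'2, hj1⟩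

/-- In a lonesum matrix, the number of distinct nonzero column vectors equals
the number of distinct nonzero row vectors. -/
theorem lonesum_card_distinct_cols_eq_rows {n k : ℕ} (M : Fin n → Fin k → Bool)
    (hM : Lonesum M) :
    ((univ.image fun j : Fin k => fun i : Fin n => M i j).filter
        fun c => c ≠ fun _ => false).card =
      ((univ.image fun i : Fin n => fun j : Fin k => M i j).filter
        fun r => r ≠ fun _ => false).card := by
  set R : (Fin n → Bool) → (Fin k → Bool) :=
    fun c j => decide (∀ i, c i = true → M i j = true) with hR
  apply Finset.card_bij (fun c _ => R c)
  · -- maps into target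
    intro c hc
    simp only [mem_filter, mem_image, mem_univ, true_and] at hc
    obtain ⟨⟨j₀, hj₀⟩, hne⟩ := hc
    -- support of c is nonempty
    have hex : ∃ i, c i = true := by
      by_contra h
      push_neg at h
      apply hne
      funext i
      simpa using h i
    have hS : (univ.filter fun i => c i = true).Nonempty := by
      obtain ⟨i₀, hi₀⟩ := hex
      exact ⟨i₀, by simp [hi₀]⟩
    obtain ⟨istar, histarmem, histarmin⟩ := lonesum_exists_min_comparable _ hS
      (fun i => fun j => M i j)
      (fun a _ b _ => lonesum_rows_comp M hM a b)
    simp only [mem_filter, mem_univ, true_and] at histarmem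
    simp only [mem_filter, mem_image, mem_univ, true_and]
    constructor
    · refine ⟨istar, ?_⟩
      funext j
      rw [hR]
      rcases h : M istar j with _ | _
      · symm
        rw [decide_eq_false_iff_not]
        intro hall
        have := hall istar histarmem
        rw [h] at this
        exact absurd this (by simp)
      · symm
        rw [decide_eq_true_eq]
        intro i' hi'
        exact histarmin i' (by simp [hi']) j h
    · -- R c is nonzero: evaluate at j₀
      intro heq
      have := congrFun heq j₀
      rw [hR] at this
      simp only [decide_eq_false_iff_not] at this
      apply this
      intro i hi
      rw [← hj₀] at hi
      exact hi
  · -- injective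
    intro c hc c' hc' heq
    simp only [mem_filter, mem_image, mem_univ, true_and] at hc hc'
    obtain ⟨⟨j₀, hj₀⟩, hne⟩ := hc
    obtain ⟨⟨j₁, hj₁⟩, hne'⟩ := hc'
    by_contra hcc
    have hdiff : ∃ i, c i ≠ c' i := by
      by_contra h
      push_neg at h
      exact hcc (funext h)
    obtain ⟨i₀, hi₀⟩ := hdiff
    have hc0 : ∀ i, M i j₀ = c i := fun i => congrFun hj₀ i
    have hc1 : ∀ i, M i j₁ = c' i := fun i => congrFun hj₁ i
    have hcomp := lonesum_cols_comp M hM j₀ j₁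
    simp only [hc0, hc1] at hcomp
    rcases hcomp with h | h
    · -- c ≤ c' and c ≠ c' : ∃ i, c i = false, c' i = true
      have hci : c i₀ = false := by
        rcases hc : c i₀ with _ | _
        · rfl
        · exact absurd (hc.trans (h i₀ hc).symm) hi₀
      have hc'i : c' i₀ = true := by
        rcases hc : c' i₀ with _ | _
        · rw [hc] at hi₀; rw [hci] at hi₀; exact absurd rfl hi₀
        · rfl
      have := congrFun heq j₀
      rw [hR] at this
      have h1 : decide (∀ i, c i = true → M i j₀ = true) = true := by
        rw [decide_eq_true_eq]
        intro i hi
        rw [← hj₀] at hi; exact hi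
      have h2 : decide (∀ i, c' i = true → M i j₀ = true) = false := by
        rw [decide_eq_false_iff_not]
        intro hall
        have := hall i₀ hc'i
        rw [← hj₀] at hci
        simp only at hci
        rw [this] at hci
        exact absurd hci (by simp)
      simp only [h1, h2] at this
      exact Bool.noConfusion this
    · -- c' ≤ c, symmetric; evaluate at j₁
      have hc'i : c' i₀ = false := by
        rcases hc : c' i₀ with _ | _
        · rfl
        · exact absurd ((h i₀ hc).trans hc.symm) hi₀
      have hci : c i₀ = true := by
        rcases hc : c i₀ with _ | _
        · rw [hc, hc'i] at hi₀; exact absurd rfl hi₀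
        · rfl
      have := congrFun heq j₁
      rw [hR] at this
      have h1 : decide (∀ i, c' i = true → M i j₁ = true) = true := by
        rw [decide_eq_true_eq]
        intro i hi
        rw [← hj₁] at hi; exact hi
      have h2 : decide (∀ i, c i = true → M i j₁ = true) = false := by
        rw [decide_eq_false_iff_not]
        intro hall
        have := hall i₀ hci
        rw [← hj₁] at hc'i
        simp only at hc'i
        rw [this] at hc'i
        exact absurd hc'i (by simp)
      simp only [h1, h2] at this
      exact Bool.noConfusion this
  · -- surjective
    intro r hr
    simp only [mem_filter, mem_image, mem_univ, true_and] at hr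
    obtain ⟨⟨i, hi⟩, hne⟩ := hr
    have hex : ∃ j, M i j = true := by
      by_contra h
      push_neg at h
      apply hne
      rw [← hi]
      funext j
      simpa using h j
    have hT : (univ.filter fun j => M i j = true).Nonempty := by
      obtain ⟨j₀, hj₀⟩ := hex
      exact ⟨j₀, by simp [hj₀]⟩
    obtain ⟨jstar, hjstarmem, hjstarmin⟩ := lonesum_exists_min_comparable _ hT
      (fun j => fun i => M i j)
      (fun a _ b _ => lonesum_cols_comp M hM a b)
    simp only [mem_filter, mem_univ, true_and] at hjstarmem
    refine ⟨fun i' => M i' jstar, ?_, ?_⟩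
    · simp only [mem_filter, mem_image, mem_univ, true_and]
      constructor
      · exact ⟨jstar, rfl⟩
      · intro heq
        have : M i jstar = false := congrFun heq i
        rw [hjstarmem] at this
        exact absurd this (by simp)
    · rw [← hi]
      funext j
      rw [hR]
      rcases h : M i j with _ | _
      · rw [decide_eq_false_iff_not]
        intro hall
        have := hall i hjstarmem
        rw [h] at this
        exact absurd this (by simp)
      · rw [decide_eq_true_eq]
        intro i' hi'
        exact hjstarmin j (by simp [h]) i' hi'
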